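/- For every natural number N there exists an even 1-3 tree T with at least N vertices such that T contains no leaf-leaf path of length 20. -/

import Mathlib

/-- A vertex of a graph is a *leaf* if it has exactly one neighbour. -/
def IsLeafVertex {V : Type} (T : SimpleGraph V) (v : V) : Prop :=
  (T.neighborSet v).ncard = 1

/-- A *1-3 tree* is a finite tree in which every vertex has degree 1 or 3. -/
def IsOneThreeTree {V : Type} (T : SimpleGraph V) : Prop :=
  T.IsTree ∧ ∀ v : V, (T.neighborSet v).ncard = 1 ∨ (T.neighborSet v).ncard = 3

/-- A tree is *even* if the (unique) path between any two leaves has even length. -/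
def IsEvenTree {V : Type} (T : SimpleGraph V) : Prop :=
  ∀ u w : V, IsLeafVertex T u → IsLeafVertex T w → Even (T.dist u w)

/-- `T` has a *leaf-leaf path of length `ℓ`*: a path with `ℓ` edges whose two
endpoints are leaves (for `ℓ = 0` this is a single leaf). -/
def HasLeafLeafPath {V : Type} (T : SimpleGraph V) (ℓ : ℕ) : Prop :=
  ∃ (u w : V) (p : T.Walk u w),
    IsLeafVertex T u ∧ IsLeafVertex T w ∧ p.IsPath ∧ p.length = ℓ

namespace T20

def seqL : List ℕ := [2,1,4,3,2,7,6,5,6,7,2,3,4,1,2,1,8,9,6,5,6,9,8,1]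

def sQ (t : ℕ) : ℕ := seqL.getD (t % 24) 0

lemma sq_facts : ∀ r < 24, seqL.getD r 0 ≤ 9 ∧ seqL.getD r 0 % 2 = r % 2 ∧ 1 ≤ seqL.getD r 0 := by decide

lemma arith_mid : ∀ d < 19, 1 ≤ d → ∀ r < 24,
    seqL.getD r 0 + seqL.getD ((r + d) % 24) 0 + d ≠ 20 := by decide

lemma arith_left : ∀ t < 20, seqL.getD t 0 + t ≠ 20 := by decide

lemma arith_right : ∀ j < 20, 1 ≤ j → seqL.getD ((24 - j) % 24) 0 + j ≠ 20 := by decide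

end T20

namespace S2
open T20

def H (k t : ℕ) : ℕ := if t = 0 ∨ t = 24 * k then 0 else sQ t

lemma H_le (k t : ℕ) : H k t ≤ 9 := by
  unfold H
  split
  · omega
  · exact (sq_facts (t % 24) (Nat.mod_lt _ (by norm_num))).1

lemma H_parity (k t : ℕ) : H k t % 2 = t % 2 := by
  unfold H
  split
  · rename_i h
    rcases h with h | h <;> omega
  · have h2 := (sq_facts (t % 24) (Nat.mod_lt _ (by norm_num))).2.1
    have : t % 24 % 2 = t % 2 := Nat.mod_mod_of_dvd t (by norm_num)
    unfold sQ
    omega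

lemma H_pos (k t : ℕ) (h0 : t ≠ 0) (h1 : t ≠ 24 * k) : 1 ≤ H k t := by
  unfold H
  rw [if_neg (by tauto)]
  exact (sq_facts (t % 24) (Nat.mod_lt _ (by norm_num))).2.2

lemma H_zero_iff (k t : ℕ) : H k t = 0 ↔ (t = 0 ∨ t = 24 * k) := by
  constructor
  · intro h
    by_contra hc
    push_neg at hc
    have := H_pos k t hc.1 hc.2
    omega
  · intro h; unfold H; rw [if_pos h]

lemma key_arith (k : ℕ) (hk : 1 ≤ k) : ∀ s t, s < t → t ≤ 24 * k →
    H k s + H k t + (t - s) ≠ 20 := by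
  intro s t hst ht hEq
  have hHs := H_le k s
  have hHt := H_le k t
  by_cases hs0 : H k s = 0
  · have hs' := (H_zero_iff k s).mp hs0
    by_cases ht0 : H k t = 0
    · -- both ends
      have ht' := (H_zero_iff k t).mp ht0
      -- s = 0, t = 24k  (since s < t ≤ 24k)
      have hs0' : s = 0 := by rcases hs' with h | h; exact h; omega
      have ht0' : t = 24 * k := by rcases ht' with h | h; omega; exact h
      omega
    · -- s = 0 (s = 24k impossible), t middle: sQ t + t = 20 contradiction
      have hs0' : s = 0 := by rcases hs' with h | h; exact h; omega
      subst hs0'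
      have htmid : t ≠ 0 ∧ t ≠ 24 * k := by
        constructor
        · omega
        · intro hc; exact ht0 ((H_zero_iff k t).mpr (Or.inr hc))
      have hHt' : H k t = sQ t := by unfold H; rw [if_neg (by tauto)]
      -- sum: sQ t + t = 20, so t < 20
      have ht20 : t < 20 := by omega
      have : sQ t = seqL.getD t 0 := by unfold sQ; rw [Nat.mod_eq_of_lt (by omega)]
      have := arith_left t ht20
      omega
  · by_cases ht0 : H k t = 0
    · -- t = 24k (t=0 impossible), s middle
      have ht' : t = 24 * k := by
        rcases (H_zero_iff k t).mp ht0 with h | h; omega; exact h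
      have hsmid : s ≠ 0 ∧ s ≠ 24 * k := by
        constructor
        · intro hc; exact hs0 ((H_zero_iff k s).mpr (Or.inl hc))
        · omega
      have hHs' : H k s = sQ s := by unfold H; rw [if_neg (by tauto)]
      set j := t - s with hj
      have hj1 : 1 ≤ j := by omega
      have hj20 : j < 20 := by omega
      have hsval : s = 24 * k - j := by omega
      have hmod : s % 24 = (24 - j) % 24 := by omega
      have : sQ s = seqL.getD ((24 - j) % 24) 0 := by unfold sQ; rw [hmod]
      have := arith_right j hj20 hj1
      omega
    · -- both middle
      have hHs' : H k s = sQ s := by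
        unfold H; rw [if_neg]; intro hc; exact hs0 ((H_zero_iff k s).mpr hc)
      have hHt' : H k t = sQ t := by
        unfold H; rw [if_neg]; intro hc; exact ht0 ((H_zero_iff k t).mpr hc)
      set d := t - s with hd
      have hd1 : 1 ≤ d := by omega
      have hd19 : d < 19 := by omega
      have hmod : t % 24 = (s % 24 + d) % 24 := by omega
      have h1 : sQ s = seqL.getD (s % 24) 0 := rfl
      have h2 : sQ t = seqL.getD ((s % 24 + d) % 24) 0 := by unfold sQ; rw [hmod]
      have := arith_mid d hd19 hd1 (s % 24) (Nat.mod_lt _ (by norm_num))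
      omega

end S2

namespace S2
open SimpleGraph

variable (k : ℕ)

def m (k : ℕ) : ℕ := 24 * k + 1

abbrev V (k : ℕ) : Type := Σ t : Fin (m k), Fin (2 ^ H k t)

lemma m_pos : 0 < m k := by unfold m; omega

def P : V k → V k := fun x =>
  if h : 1 ≤ (x.2 : ℕ) then
    ⟨x.1, ⟨(x.2 : ℕ) / 2, lt_of_le_of_lt (Nat.div_le_self _ _) x.2.2⟩⟩
  else if h2 : 1 ≤ (x.1 : ℕ) then
    ⟨⟨(x.1 : ℕ) - 1, by omega⟩, ⟨0, Nat.two_pow_pos _⟩⟩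
  else x

def dep : V k → ℕ := fun x => (x.1 : ℕ) + Nat.size (x.2 : ℕ)

def root : V k := ⟨⟨0, m_pos k⟩, ⟨0, Nat.two_pow_pos _⟩⟩

def G : SimpleGraph (V k) where
  Adj x y := x ≠ y ∧ (P k x = y ∨ P k y = x)
  symm := ⟨fun x y h => ⟨h.1.symm, h.2.symm⟩⟩
  loopless := ⟨fun x h => h.1 rfl⟩

lemma sigma_eq {t t' : Fin (m k)} {i : Fin (2 ^ H k t)} {i' : Fin (2 ^ H k t')} :
    (⟨t, i⟩ : V k) = ⟨t', i'⟩ ↔ (t : ℕ) = (t' : ℕ) ∧ (i : ℕ) = (i' : ℕ) := by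
  constructor
  · intro h
    cases h
    exact ⟨rfl, rfl⟩
  · rintro ⟨h1, h2⟩
    have ht : t = t' := Fin.ext h1
    subst ht
    have : i = i' := Fin.ext h2
    subst this
    rfl

lemma P_root : P k (root k) = root k := by
  unfold P root
  simp

lemma size_div2 {i : ℕ} (h : 1 ≤ i) : Nat.size (i / 2) + 1 = Nat.size i := by
  have hs : 1 ≤ Nat.size i := Nat.size_pos.mpr h
  have h1 : Nat.size i ≤ Nat.size (i / 2) + 1 := by
    rw [Nat.size_le]
    have h2 : i / 2 < 2 ^ Nat.size (i / 2) := Nat.lt_size_self _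
    have h3 : i % 2 < 2 := Nat.mod_lt _ (by norm_num)
    have h4 := Nat.div_add_mod i 2
    have : 2 ^ (Nat.size (i / 2) + 1) = 2 ^ Nat.size (i / 2) * 2 := by ring
    omega
  have h2 : Nat.size (i / 2) ≤ Nat.size i - 1 := by
    rw [Nat.size_le]
    have h5 : i < 2 ^ Nat.size i := Nat.lt_size_self _
    have : 2 ^ Nat.size i = 2 ^ (Nat.size i - 1) * 2 := by
      rw [← pow_succ]
      congr 1
      omega
    omega
  omega

lemma P_local {t : Fin (m k)} {i : Fin (2 ^ H k t)} (hi : 1 ≤ (i : ℕ)) :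
    P k ⟨t, i⟩ = ⟨t, ⟨(i : ℕ) / 2, lt_of_le_of_lt (Nat.div_le_self _ _) i.2⟩⟩ :=
  dif_pos hi

lemma P_spine {t : Fin (m k)} {i : Fin (2 ^ H k t)} (hi : (i : ℕ) = 0) (ht : 1 ≤ (t : ℕ)) :
    P k ⟨t, i⟩ = ⟨⟨(t : ℕ) - 1, by omega⟩, ⟨0, Nat.two_pow_pos _⟩⟩ := by
  unfold P
  simp only [hi]
  norm_num
  rw [dif_pos ht]

lemma dep_mk (t : Fin (m k)) (i : Fin (2 ^ H k t)) : dep k ⟨t, i⟩ = (t : ℕ) + Nat.size (i : ℕ) := rfl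

lemma dep_P {x : V k} (h : x ≠ root k) : dep k (P k x) + 1 = dep k x := by
  obtain ⟨t, i⟩ := x
  by_cases hi : 1 ≤ (i : ℕ)
  · rw [P_local k hi, dep_mk, dep_mk]
    have := size_div2 hi
    simp only []
    omega
  · have hi0 : (i : ℕ) = 0 := by omega
    have ht : 1 ≤ (t : ℕ) := by
      by_contra hc
      refine h ((sigma_eq k).mpr ⟨?_, ?_⟩) <;> simp [root, hi0] <;> omega
    rw [P_spine k hi0 ht, dep_mk, dep_mk]
    simp only [hi0, Nat.size_zero, Fin.val_mk]
    omega

lemma dep_eq_zero_iff {x : V k} : dep k x = 0 ↔ x = root k := by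
  obtain ⟨t, i⟩ := x
  rw [dep_mk]
  constructor
  · intro h
    have h1 : (t : ℕ) = 0 := by omega
    have h2 : Nat.size (i : ℕ) = 0 := by omega
    have h3 : (i : ℕ) = 0 := Nat.size_eq_zero.mp h2
    exact (sigma_eq k).mpr ⟨h1, by simp [root, h3]⟩
  · intro h
    have h1 : (t : ℕ) = 0 ∧ (i : ℕ) = 0 := by
      have := (sigma_eq k).mp h
      simpa [root] using this
    simp [h1.1, h1.2, Nat.size_zero]

lemma dep_P_le (x : V k) : dep k (P k x) ≤ dep k x := by
  by_cases h : x = root k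
  · rw [h, P_root]
  · have := dep_P k h
    omega

lemma P_ne {x : V k} (h : x ≠ root k) : P k x ≠ x := by
  intro hc
  have h1 := dep_P k h
  rw [hc] at h1
  omega

lemma adj_parent {x : V k} (h : x ≠ root k) : (G k).Adj x (P k x) :=
  ⟨fun hc => P_ne k h hc.symm, Or.inl rfl⟩

end S2

namespace S2
open SimpleGraph

variable (k : ℕ)

def Anc (x y : V k) : Prop := ∃ c, (P k)^[c] y = x

lemma anc_refl (x : V k) : Anc k x x := ⟨0, rfl⟩

lemma anc_of_parent {x y : V k} (h : Anc k x (P k y)) : Anc k x y := by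
  obtain ⟨c, hc⟩ := h
  exact ⟨c + 1, by rw [Function.iterate_succ_apply]; exact hc⟩

lemma anc_step {x y : V k} : Anc k x y ↔ x = y ∨ Anc k x (P k y) := by
  constructor
  · rintro ⟨c, hc⟩
    match c with
    | 0 => exact Or.inl hc.symm
    | c + 1 =>
      right
      rw [Function.iterate_succ_apply] at hc
      exact ⟨c, hc⟩
  · rintro (rfl | h)
    · exact anc_refl k x
    · exact anc_of_parent k h

lemma dep_iterate_le (c : ℕ) (y : V k) : dep k ((P k)^[c] y) ≤ dep k y := by
  induction c with
  | zero => rfl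
  | succ c ih =>
    rw [Function.iterate_succ_apply']
    exact le_trans (dep_P_le k _) ih

lemma anc_dep_le {x y : V k} (h : Anc k x y) : dep k x ≤ dep k y := by
  obtain ⟨c, hc⟩ := h
  rw [← hc]
  exact dep_iterate_le k c y

lemma not_anc_parent {x : V k} (h : x ≠ root k) : ¬ Anc k x (P k x) := by
  intro hc
  have h1 := anc_dep_le k hc
  have h2 := dep_P k h
  omega

lemma reachable_root : ∀ (n : ℕ) (x : V k), dep k x ≤ n → (G k).Reachable x (root k) := by
  intro n
  induction n with
  | zero =>
    intro x hx
    rw [Nat.le_zero, dep_eq_zero_iff] at hx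
    rw [hx]
  | succ n ih =>
    intro x hx
    by_cases h : x = root k
    · rw [h]
    · have h1 := dep_P k h
      exact (adj_parent k h).reachable.trans (ih (P k x) (by omega))

lemma connected : (G k).Connected := by
  rw [connected_iff]
  refine ⟨fun x y => ?_, ⟨root k⟩⟩
  exact (reachable_root k _ x le_rfl).trans (reachable_root k _ y le_rfl).symm

lemma edge_in_walk {x : V k} (hx : x ≠ root k) :
    ∀ {y z : V k} (p : (G k).Walk y z), Anc k x y → ¬ Anc k x z →
      s(x, P k x) ∈ p.edges := by
  intro y z p
  induction p with
  | nil => intro h1 h2; exact absurd h1 h2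
  | @cons a b c hab p ih =>
    intro h1 h2
    by_cases hb : Anc k x b
    · exact List.mem_cons_of_mem _ (ih hb h2)
    · rcases hab.2 with hPa | hPb
      · -- b = P a
        have : x = a := by
          rcases (anc_step k).mp h1 with h | h
          · exact h
          · rw [hPa] at h; exact absurd h hb
        subst this
        rw [hPa]
        exact List.mem_cons_self
      · -- a = P b
        exfalso
        rw [← hPb] at h1
        exact hb (anc_of_parent k h1)

lemma acyclic : (G k).IsAcyclic := by
  rw [isAcyclic_iff_forall_adj_isBridge]
  intro v w hvw
  rcases hvw.2 with h | h
  · subst h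
    rw [isBridge_iff_adj_and_forall_walk_mem_edges]
    intro p
    have hv : v ≠ root k := fun hc => hvw.1 (by rw [hc, P_root])
    exact edge_in_walk k hv p (anc_refl k v) (not_anc_parent k hv)
  · subst h
    rw [isBridge_iff_adj_and_forall_walk_mem_edges]
    intro p
    have hw : w ≠ root k := fun hc => hvw.1 (by rw [hc, P_root])
    have := edge_in_walk k hw p.reverse (anc_refl k w) (not_anc_parent k hw)
    rw [Walk.edges_reverse, List.mem_reverse] at this
    rw [Sym2.eq_swap]
    exact this

lemma isTree : (G k).IsTree := ⟨connected k, acyclic k⟩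

end S2

namespace S2
open SimpleGraph

-- In a tree, every path between two vertices has length equal to the distance.
lemma path_length_eq_dist {W : Type} [DecidableEq W] {G : SimpleGraph W} (hT : G.IsTree) {u w : W}
    (p : G.Walk u w) (hp : p.IsPath) : p.length = G.dist u w := by
  obtain ⟨q, hq⟩ := hT.isConnected.exists_walk_length_eq_dist u w
  obtain ⟨r, hr, hru⟩ := hT.existsUnique_path u w
  have h1 : p = r := hru p hp
  have h2 : q.bypass = r := hru q.bypass q.bypass_isPath
  have h3 : q.bypass.length ≤ q.length := Walk.length_bypass_le q
  have h4 := SimpleGraph.dist_le p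
  have h5 : p.length = q.bypass.length := by rw [h1, ← h2]
  omega

variable (k : ℕ)

lemma adj_dep {x y : V k} (h : (G k).Adj x y) :
    dep k x + 1 = dep k y ∨ dep k y + 1 = dep k x := by
  rcases h.2 with h2 | h2
  · right
    have hx : x ≠ root k := by
      intro hc
      apply h.1
      rw [hc] at h2 ⊢
      rw [P_root] at h2
      exact h2
    rw [← h2]
    exact dep_P k hx
  · left
    have hy : y ≠ root k := by
      intro hc
      apply h.1
      rw [hc] at h2 ⊢
      rw [P_root] at h2
      exact h2.symm
    rw [← h2]
    exact dep_P k hy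

lemma walk_parity {u w : V k} (p : (G k).Walk u w) :
    (p.length + dep k u + dep k w) % 2 = 0 := by
  induction p with
  | nil => simp only [Walk.length_nil]; omega
  | @cons a b c hab p ih =>
    have := adj_dep k hab
    rw [Walk.length_cons]
    omega

-- iterating P inside a block
lemma iter_shift (t : Fin (m k)) (j : Fin (2 ^ H k t)) :
    ∀ c, c ≤ Nat.size (j : ℕ) →
      (P k)^[c] ⟨t, j⟩ = ⟨t, ⟨(j : ℕ) / 2 ^ c, lt_of_le_of_lt (Nat.div_le_self _ _) j.2⟩⟩ := by
  intro c
  induction c with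
  | zero =>
    intro _
    simp only [Function.iterate_zero, id_eq, pow_zero, Nat.div_one]
  | succ c ih =>
    intro hc
    rw [Function.iterate_succ_apply', ih (by omega)]
    have hj : 1 ≤ (j : ℕ) / 2 ^ c := by
      have : 2 ^ c ≤ (j : ℕ) := by
        have := Nat.lt_size.mp (by omega : c < Nat.size (j : ℕ))
        exact this
      exact Nat.one_le_div_iff (Nat.two_pow_pos c) |>.mpr this
    rw [P_local k hj]
    refine (sigma_eq k).mpr ⟨rfl, ?_⟩
    simp only [Fin.val_mk]
    rw [Nat.div_div_eq_div_mul, pow_succ]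

lemma iter_spine (t : Fin (m k)) :
    ∀ c, c ≤ (t : ℕ) →
      (P k)^[c] ⟨t, ⟨0, Nat.two_pow_pos _⟩⟩ = ⟨⟨(t : ℕ) - c, by omega⟩, ⟨0, Nat.two_pow_pos _⟩⟩ := by
  intro c
  induction c with
  | zero =>
    intro _
    simp only [Function.iterate_zero, id_eq, Nat.sub_zero]
  | succ c ih =>
    intro hc
    rw [Function.iterate_succ_apply', ih (by omega)]
    rw [P_spine k rfl (by simp only [Fin.val_mk]; omega)]
    refine (sigma_eq k).mpr ⟨?_, rfl⟩
    simp only [Fin.val_mk]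
    omega

lemma iter_root (c : ℕ) : (P k)^[c] (root k) = root k := by
  induction c with
  | zero => rfl
  | succ c ih => rw [Function.iterate_succ_apply', ih, P_root]

end S2

namespace S2
open SimpleGraph

variable (k : ℕ)

lemma root_eq (t : Fin (m k)) (ht : (t : ℕ) = 0) (i : Fin (2 ^ H k t)) (hi : (i : ℕ) = 0) :
    (⟨t, i⟩ : V k) = root k := (sigma_eq k).mpr ⟨ht, hi⟩

lemma dep_root : dep k (root k) = 0 := (dep_eq_zero_iff k).mpr rfl

def walkUp : (c : ℕ) → (x : V k) → c ≤ dep k x → (G k).Walk x ((P k)^[c] x)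
  | 0, _, _ => Walk.nil.copy rfl (by simp)
  | c + 1, x, h =>
    have hx : x ≠ root k := by
      intro hc
      rw [hc, dep_root] at h
      omega
    (Walk.cons (adj_parent k hx)
      (walkUp c (P k x) (by have := dep_P k hx; omega))).copy rfl
      (by rw [Function.iterate_succ_apply])

lemma walkUp_length : ∀ (c : ℕ) (x : V k) (h : c ≤ dep k x), (walkUp k c x h).length = c := by
  intro c
  induction c with
  | zero => intro x h; simp [walkUp]
  | succ c ih =>
    intro x h
    simp only [walkUp, Walk.length_copy, Walk.length_cons]
    rw [ih]

lemma iter_to_spine (t : Fin (m k)) (j : Fin (2 ^ H k t)) :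
    (P k)^[Nat.size (j : ℕ)] ⟨t, j⟩ = ⟨t, ⟨0, Nat.two_pow_pos _⟩⟩ := by
  rw [iter_shift k t j _ le_rfl]
  refine (sigma_eq k).mpr ⟨rfl, ?_⟩
  simp only [Fin.val_mk]
  exact Nat.div_eq_of_lt (Nat.lt_size_self _)

lemma anc_spine0 {r t : Fin (m k)} (j : Fin (2 ^ H k t)) (h : (r : ℕ) ≤ t) :
    Anc k ⟨r, ⟨0, Nat.two_pow_pos _⟩⟩ ⟨t, j⟩ := by
  refine ⟨((t : ℕ) - r) + Nat.size (j : ℕ), ?_⟩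
  rw [Function.iterate_add_apply, iter_to_spine, iter_spine k t _ (by omega)]
  exact (sigma_eq k).mpr ⟨by simp only [Fin.val_mk]; omega, rfl⟩

lemma anc_shift (t : Fin (m k)) (j : Fin (2 ^ H k t)) (c : ℕ) (hc : c ≤ Nat.size (j : ℕ)) :
    Anc k ⟨t, ⟨(j : ℕ) / 2 ^ c, lt_of_le_of_lt (Nat.div_le_self _ _) j.2⟩⟩ ⟨t, j⟩ :=
  ⟨c, iter_shift k t j c hc⟩

lemma anc_char {r t : Fin (m k)} {x : Fin (2 ^ H k r)} {j : Fin (2 ^ H k t)}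
    (h : Anc k ⟨r, x⟩ ⟨t, j⟩) :
    ((r : ℕ) = t ∧ ∃ c, (x : ℕ) = (j : ℕ) / 2 ^ c) ∨ ((r : ℕ) ≤ t ∧ (x : ℕ) = 0) := by
  obtain ⟨c, hc⟩ := h
  by_cases h1 : c ≤ Nat.size (j : ℕ)
  · rw [iter_shift k t j c h1] at hc
    obtain ⟨h2, h3⟩ := (sigma_eq k).mp hc
    exact Or.inl ⟨h2.symm, c, h3.symm⟩
  · have hc' : (P k)^[c - Nat.size (j : ℕ)] (⟨t, ⟨0, Nat.two_pow_pos _⟩⟩ : V k) = ⟨r, x⟩ := by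
      rw [← iter_to_spine k t j, ← Function.iterate_add_apply,
        show c - Nat.size (j : ℕ) + Nat.size (j : ℕ) = c from by omega]
      exact hc
    by_cases h2 : c - Nat.size (j : ℕ) ≤ (t : ℕ)
    · rw [iter_spine k t _ h2] at hc'
      obtain ⟨h3, h4⟩ := (sigma_eq k).mp hc'
      simp only [Fin.val_mk] at h3 h4
      exact Or.inr ⟨by omega, by omega⟩
    · have hroot : (⟨⟨(t : ℕ) - (t : ℕ), by omega⟩, ⟨0, Nat.two_pow_pos _⟩⟩ : V k) = root k :=
        root_eq k _ (by simp only [Fin.val_mk]; omega) _ rfl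
      have hc'' : (P k)^[c - Nat.size (j : ℕ) - (t : ℕ)] (root k) = ⟨r, x⟩ := by
        rw [← hroot, ← iter_spine k t _ le_rfl, ← Function.iterate_add_apply,
          show c - Nat.size (j : ℕ) - (t : ℕ) + (t : ℕ) = c - Nat.size (j : ℕ) from by omega]
        exact hc'
      rw [iter_root] at hc''
      obtain ⟨h3, h4⟩ := (sigma_eq k).mp hc''.symm
      simp only [root, Fin.val_mk] at h3 h4
      exact Or.inr ⟨by omega, by omega⟩

lemma anc_unstep {x κ : V k} (hne : κ ≠ x) : Anc k κ x ↔ Anc k κ (P k x) := by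
  rw [anc_step k]
  constructor
  · rintro (h | h)
    · exact absurd h hne
    · exact h
  · exact Or.inr

lemma card_le_dist (u w : V k) (K : Finset (V k))
    (hK : ∀ κ ∈ K, (Anc k κ u ↔ ¬ Anc k κ w)) :
    K.card ≤ (G k).dist u w := by
  classical
  set Φ : V k → ℕ := fun v => (K.filter (fun κ => ¬ (Anc k κ v ↔ Anc k κ w))).card with hΦ
  have hsub : ∀ x : V k, (K.filter (fun κ => ¬ (Anc k κ x ↔ Anc k κ w))) ⊆
      insert x (K.filter (fun κ => ¬ (Anc k κ (P k x) ↔ Anc k κ w))) := by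
    intro x κ hκ
    rw [Finset.mem_filter] at hκ
    by_cases he : κ = x
    · subst he; exact Finset.mem_insert_self _ _
    · refine Finset.mem_insert_of_mem ?_
      rw [Finset.mem_filter]
      refine ⟨hκ.1, ?_⟩
      rw [← anc_unstep k he]
      exact hκ.2
  have hsub2 : ∀ x : V k, (K.filter (fun κ => ¬ (Anc k κ (P k x) ↔ Anc k κ w))) ⊆
      insert x (K.filter (fun κ => ¬ (Anc k κ x ↔ Anc k κ w))) := by
    intro x κ hκ
    rw [Finset.mem_filter] at hκ
    by_cases he : κ = x
    · subst he; exact Finset.mem_insert_self _ _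
    · refine Finset.mem_insert_of_mem ?_
      rw [Finset.mem_filter]
      refine ⟨hκ.1, ?_⟩
      rw [anc_unstep k he]
      exact hκ.2
  have step : ∀ x y : V k, (G k).Adj x y → Φ x ≤ Φ y + 1 := by
    intro x y hxy
    rcases hxy.2 with h | h
    · calc Φ x ≤ (insert x (K.filter (fun κ => ¬ (Anc k κ (P k x) ↔ Anc k κ w)))).card :=
            Finset.card_le_card (hsub x)
      _ ≤ Φ (P k x) + 1 := Finset.card_insert_le _ _
      _ = Φ y + 1 := by rw [h]
    · calc Φ x = (K.filter (fun κ => ¬ (Anc k κ (P k y) ↔ Anc k κ w))).card := by rw [h]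
      _ ≤ (insert y (K.filter (fun κ => ¬ (Anc k κ y ↔ Anc k κ w)))).card :=
            Finset.card_le_card (hsub2 y)
      _ ≤ Φ y + 1 := Finset.card_insert_le _ _
  have wlem : ∀ {a b : V k} (p : (G k).Walk a b), Φ a ≤ Φ b + p.length := by
    intro a b p
    induction p with
    | nil => simp
    | @cons a b c hab p ih =>
      have := step a b hab
      rw [Walk.length_cons]
      omega
  obtain ⟨q, hq⟩ := (connected k).exists_walk_length_eq_dist u w
  have h1 := wlem q
  have h2 : Φ u = K.card := by
    show (K.filter (fun κ => ¬ (Anc k κ u ↔ Anc k κ w))).card = K.card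
    congr 1
    apply Finset.filter_true_of_mem
    intro κ hκ
    have := hK κ hκ
    tauto
  have h3 : Φ w = 0 := by
    show (K.filter (fun κ => ¬ (Anc k κ w ↔ Anc k κ w))).card = 0
    simp only [Finset.card_eq_zero]
    apply Finset.filter_false_of_mem
    intro κ hκ
    simp
  omega

end S2

namespace S2
open SimpleGraph

variable (k : ℕ)

lemma size_le_H (t : Fin (m k)) (i : Fin (2 ^ H k t)) : Nat.size (i : ℕ) ≤ H k (t : ℕ) :=
  Nat.size_le.mpr i.2

lemma size_double {i : ℕ} (h : 1 ≤ i) : Nat.size (2 * i) = Nat.size i + 1 ∧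
    Nat.size (2 * i + 1) = Nat.size i + 1 := by
  constructor
  · have := size_div2 (i := 2 * i) (by omega)
    rw [show 2 * i / 2 = i from by omega] at this
    omega
  · have := size_div2 (i := 2 * i + 1) (by omega)
    rw [show (2 * i + 1) / 2 = i from by omega] at this
    omega

lemma child_cases {x y : V k} (h : P k y = x) (hne : y ≠ x) :
    ((y.1 : ℕ) = x.1 ∧ 1 ≤ (y.2 : ℕ) ∧
      ((y.2 : ℕ) = 2 * (x.2 : ℕ) ∨ (y.2 : ℕ) = 2 * (x.2 : ℕ) + 1)) ∨
    ((y.1 : ℕ) = (x.1 : ℕ) + 1 ∧ (y.2 : ℕ) = 0 ∧ (x.2 : ℕ) = 0) := by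
  obtain ⟨t', i'⟩ := y; obtain ⟨t, i⟩ := x
  dsimp only
  by_cases hi' : 1 ≤ (i' : ℕ)
  · rw [P_local k hi'] at h
    obtain ⟨h1, h2⟩ := (sigma_eq k).mp h
    simp only [Fin.val_mk] at h1 h2
    left
    refine ⟨h1, hi', ?_⟩
    have := Nat.div_add_mod (i' : ℕ) 2
    have hm : (i' : ℕ) % 2 < 2 := Nat.mod_lt _ (by norm_num)
    omega
  · have hi0 : (i' : ℕ) = 0 := by omega
    by_cases ht' : 1 ≤ (t' : ℕ)
    · rw [P_spine k hi0 ht'] at h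
      obtain ⟨h1, h2⟩ := (sigma_eq k).mp h
      simp only [Fin.val_mk] at h1 h2
      right
      exact ⟨by omega, hi0, h2.symm⟩
    · exfalso
      have hy : (⟨t', i'⟩ : V k) = root k := root_eq k _ (by omega) _ hi0
      rw [hy, P_root] at h
      exact hne (hy.trans h)

lemma H_fin_zero (hk : 1 ≤ k) : H k (0 : ℕ) = 0 := by unfold H; simp

lemma adj_child {x y : V k} (h : P k y = x) (hne : y ≠ x) : (G k).Adj x y :=
  ⟨fun hc => hne hc.symm, Or.inr h⟩

lemma m_val : m k = 24 * k + 1 := rfl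

lemma ne_root_of_snd {t : Fin (m k)} {i : Fin (2 ^ H k t)} (hi : 1 ≤ (i : ℕ)) :
    (⟨t, i⟩ : V k) ≠ root k := by
  intro hc
  have h0 : dep k ⟨t, i⟩ = 0 := by rw [hc, dep_root]
  rw [dep_mk] at h0
  have := Nat.size_pos.mpr hi
  omega

lemma ne_root_of_fst {t : Fin (m k)} {i : Fin (2 ^ H k t)} (ht : 1 ≤ (t : ℕ)) :
    (⟨t, i⟩ : V k) ≠ root k := by
  intro hc
  have h0 : dep k ⟨t, i⟩ = 0 := by rw [hc, dep_root]
  rw [dep_mk] at h0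
  omega

lemma no_heap_child {t : Fin (m k)} {i : Fin (2 ^ H k t)}
    (hsz : Nat.size (i : ℕ) = H k (t : ℕ)) {y : V k}
    (h : P k y = ⟨t, i⟩) (hne : y ≠ ⟨t, i⟩) :
    (y.1 : ℕ) = (t : ℕ) + 1 ∧ (y.2 : ℕ) = 0 ∧ (i : ℕ) = 0 := by
  rcases child_cases k h hne with ⟨h1, h2, h3⟩ | ⟨h1, h2, h3⟩
  · exfalso
    dsimp only at h1 h3
    have hH : H k (y.1 : ℕ) = H k (t : ℕ) := congrArg (H k) h1
    have hs1 : Nat.size (y.2 : ℕ) ≤ H k (y.1 : ℕ) := size_le_H k y.1 y.2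
    by_cases hi : 1 ≤ (i : ℕ)
    · have hd := size_double (i := (i : ℕ)) hi
      rcases h3 with h3 | h3 <;> rw [h3] at hs1 <;> omega
    · have hi0 : (i : ℕ) = 0 := by omega
      rw [hi0, Nat.size_zero] at hsz
      have hps := Nat.size_pos.mpr h2
      omega
  · dsimp only at h1 h2 h3
    exact ⟨h1, h2, h3⟩

-- case: any leaf-shaped vertex which is not the root
lemma nbhd_leaf {t : Fin (m k)} {i : Fin (2 ^ H k t)}
    (hsz : Nat.size (i : ℕ) = H k (t : ℕ)) (hroot : (⟨t, i⟩ : V k) ≠ root k)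
    (hnochild : ∀ y : V k, P k y = ⟨t, i⟩ → y ≠ ⟨t, i⟩ → False) :
    (G k).neighborSet ⟨t, i⟩ = {P k ⟨t, i⟩} := by
  ext y
  simp only [mem_neighborSet, Set.mem_singleton_iff]
  constructor
  · rintro ⟨hne, h | h⟩
    · exact h.symm
    · exact absurd h (fun h => hnochild y h (fun hc => hne hc.symm))
  · intro h
    subst h
    exact adj_parent k hroot

-- gadget leaf: no children
lemma nochild_leaf {t : Fin (m k)} {i : Fin (2 ^ H k t)} (hi : 1 ≤ (i : ℕ))
    (hsz : Nat.size (i : ℕ) = H k (t : ℕ)) :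
    ∀ y : V k, P k y = ⟨t, i⟩ → y ≠ ⟨t, i⟩ → False := by
  intro y h hne
  have := no_heap_child k hsz h hne
  omega

-- far end: no children
lemma nochild_end {t : Fin (m k)} {i : Fin (2 ^ H k t)} (ht : (t : ℕ) = 24 * k) :
    ∀ y : V k, P k y = ⟨t, i⟩ → y ≠ ⟨t, i⟩ → False := by
  intro y h hne
  have hH0 : H k (t : ℕ) = 0 := by rw [ht]; unfold H; simp
  have hpow : 2 ^ H k (t : ℕ) = 1 := by rw [hH0, pow_zero]
  have hilt : (i : ℕ) < 2 ^ H k (t : ℕ) := i.2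
  have hi0 : (i : ℕ) = 0 := by omega
  have hsz : Nat.size (i : ℕ) = H k (t : ℕ) := by rw [hi0, Nat.size_zero, hH0]
  have h1 := no_heap_child k hsz h hne
  have h2 := y.1.2
  have hm := m_val k
  omega

-- root vertex
lemma nbhd_root (hk : 1 ≤ k) :
    (G k).neighborSet (root k) =
      {(⟨⟨1, by rw [m_val]; omega⟩, ⟨0, Nat.two_pow_pos _⟩⟩ : V k)} := by
  ext y
  simp only [mem_neighborSet, Set.mem_singleton_iff]
  constructor
  · rintro ⟨hne, h | h⟩
    · exfalso
      rw [P_root] at h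
      exact hne h
    · have hsz : Nat.size ((root k).2 : ℕ) = H k ((root k).1 : ℕ) := by
        show Nat.size 0 = H k 0
        rw [Nat.size_zero, H_fin_zero k hk]
      have h1 := no_heap_child k hsz h (fun hc => hne hc.symm)
      obtain ⟨ty, iy⟩ := y
      refine (sigma_eq k).mpr ⟨?_, ?_⟩ <;> simp only [Fin.val_mk]
      · exact h1.1
      · exact h1.2.1
  · intro h
    subst h
    apply adj_child
    · rw [P_spine k rfl (by simp)]
      exact (sigma_eq k).mpr ⟨by simp [root], rfl⟩
    · exact ne_root_of_fst k (by simp)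

-- heap-internal vertex
lemma nbhd_internal {t : Fin (m k)} {i : Fin (2 ^ H k t)} (hi : 1 ≤ (i : ℕ))
    (hsz : Nat.size (i : ℕ) < H k (t : ℕ)) :
    (G k).neighborSet ⟨t, i⟩ =
      {P k ⟨t, i⟩,
       ⟨t, ⟨2 * (i : ℕ), by
          have h1 : Nat.size (i : ℕ) ≤ H k (t : ℕ) - 1 := by omega
          have h2 : (i : ℕ) < 2 ^ (H k (t : ℕ) - 1) := Nat.size_le.mp h1
          have h3 : 2 ^ (H k (t : ℕ) - 1) * 2 = 2 ^ H k (t : ℕ) := by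
            rw [← pow_succ]
            congr 1
            have := Nat.size_pos.mpr hi
            omega
          omega⟩⟩,
       ⟨t, ⟨2 * (i : ℕ) + 1, by
          have h1 : Nat.size (i : ℕ) ≤ H k (t : ℕ) - 1 := by omega
          have h2 : (i : ℕ) < 2 ^ (H k (t : ℕ) - 1) := Nat.size_le.mp h1
          have h3 : 2 ^ (H k (t : ℕ) - 1) * 2 = 2 ^ H k (t : ℕ) := by
            rw [← pow_succ]
            congr 1
            have := Nat.size_pos.mpr hi
            omega
          omega⟩⟩} := by
  ext y
  simp only [mem_neighborSet, Set.mem_insert_iff, Set.mem_singleton_iff]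
  constructor
  · rintro ⟨hne, h | h⟩
    · exact Or.inl h.symm
    · rcases child_cases k h (fun hc => hne hc.symm) with ⟨h1, h2, h3⟩ | ⟨h1, h2, h3⟩
      · obtain ⟨ty, iy⟩ := y
        dsimp only at h1 h3
        rcases h3 with h3 | h3
        · exact Or.inr (Or.inl ((sigma_eq k).mpr ⟨h1, by simp only [Fin.val_mk]; omega⟩))
        · exact Or.inr (Or.inr ((sigma_eq k).mpr ⟨h1, by simp only [Fin.val_mk]; omega⟩))
      · dsimp only at h3
        omega
  · rintro (h | h | h) <;> subst h
    · exact adj_parent k (ne_root_of_snd k hi)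
    · apply adj_child
      · rw [P_local k (by simp only [Fin.val_mk]; omega)]
        refine (sigma_eq k).mpr ⟨rfl, ?_⟩
        simp only [Fin.val_mk]
        omega
      · intro hc
        have h2 := ((sigma_eq k).mp hc).2
        simp only [Fin.val_mk] at h2
        omega
    · apply adj_child
      · rw [P_local k (by simp only [Fin.val_mk]; omega)]
        refine (sigma_eq k).mpr ⟨rfl, ?_⟩
        simp only [Fin.val_mk]
        omega
      · intro hc
        have h2 := ((sigma_eq k).mp hc).2
        simp only [Fin.val_mk] at h2
        omega

-- middle spine vertex
lemma nbhd_spine {t : Fin (m k)} {i : Fin (2 ^ H k t)} (hi : (i : ℕ) = 0)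
    (ht1 : 1 ≤ (t : ℕ)) (ht2 : (t : ℕ) ≠ 24 * k) :
    (G k).neighborSet ⟨t, i⟩ =
      {P k ⟨t, i⟩,
       ⟨t, ⟨1, by
          have hH := H_pos k (t : ℕ) (by omega) ht2
          have : (2:ℕ) ^ 1 ≤ 2 ^ H k (t : ℕ) := Nat.pow_le_pow_right (by norm_num) hH
          omega⟩⟩,
       ⟨⟨(t : ℕ) + 1, by
          have := t.2
          have hm := m_val k
          omega⟩, ⟨0, Nat.two_pow_pos _⟩⟩} := by
  ext y
  simp only [mem_neighborSet, Set.mem_insert_iff, Set.mem_singleton_iff]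
  constructor
  · rintro ⟨hne, h | h⟩
    · exact Or.inl h.symm
    · rcases child_cases k h (fun hc => hne hc.symm) with ⟨h1, h2, h3⟩ | ⟨h1, h2, h3⟩
      · obtain ⟨ty, iy⟩ := y
        dsimp only at h1 h2 h3
        rw [hi] at h3
        exact Or.inr (Or.inl ((sigma_eq k).mpr ⟨h1, by simp only [Fin.val_mk]; omega⟩))
      · obtain ⟨ty, iy⟩ := y
        dsimp only at h1 h2 h3
        exact Or.inr (Or.inr ((sigma_eq k).mpr ⟨h1, by simp only [Fin.val_mk]; omega⟩))
  · rintro (h | h | h) <;> subst h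
    · exact adj_parent k (ne_root_of_fst k ht1)
    · apply adj_child
      · rw [P_local k (by simp only [Fin.val_mk]; omega)]
        refine (sigma_eq k).mpr ⟨rfl, ?_⟩
        simp only [Fin.val_mk]
        omega
      · intro hc
        have h2 := ((sigma_eq k).mp hc).2
        simp only [Fin.val_mk] at h2
        omega
    · apply adj_child
      · rw [P_spine k rfl (by simp only [Fin.val_mk]; omega)]
        refine (sigma_eq k).mpr ⟨by simp only [Fin.val_mk]; omega, ?_⟩
        simp only [Fin.val_mk, hi]
      · intro hc
        have h2 := ((sigma_eq k).mp hc).1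
        simp only [Fin.val_mk] at h2
        omega

end S2

namespace S2
open SimpleGraph

variable (k : ℕ)

lemma leaf_ncard {t : Fin (m k)} {i : Fin (2 ^ H k t)} (hk : 1 ≤ k)
    (hsz : Nat.size (i : ℕ) = H k (t : ℕ)) :
    ((G k).neighborSet ⟨t, i⟩).ncard = 1 := by
  by_cases hi : 1 ≤ (i : ℕ)
  · rw [nbhd_leaf k hsz (ne_root_of_snd k hi) (nochild_leaf k hi hsz)]
    exact Set.ncard_singleton _
  · have hi0 : (i : ℕ) = 0 := by omega
    have hH0 : H k (t : ℕ) = 0 := by rw [← hsz, hi0, Nat.size_zero]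
    rcases (H_zero_iff k (t : ℕ)).mp hH0 with ht | ht
    · have : (⟨t, i⟩ : V k) = root k := root_eq k t ht i hi0
      rw [this, nbhd_root k hk]
      exact Set.ncard_singleton _
    · rw [nbhd_leaf k hsz ?_ (nochild_end k ht)]
      · exact Set.ncard_singleton _
      · apply ne_root_of_fst
        omega

lemma nonleaf_ncard {t : Fin (m k)} {i : Fin (2 ^ H k t)}
    (hsz : Nat.size (i : ℕ) ≠ H k (t : ℕ)) :
    ((G k).neighborSet ⟨t, i⟩).ncard = 3 := by
  have hszlt : Nat.size (i : ℕ) < H k (t : ℕ) :=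
    lt_of_le_of_ne (size_le_H k t i) hsz
  by_cases hi : 1 ≤ (i : ℕ)
  · rw [nbhd_internal k hi hszlt]
    have hP : P k ⟨t, i⟩ = ⟨t, ⟨(i : ℕ) / 2, lt_of_le_of_lt (Nat.div_le_self _ _) i.2⟩⟩ :=
      P_local k hi
    rw [Set.ncard_insert_of_notMem, Set.ncard_insert_of_notMem, Set.ncard_singleton]
    · intro hc
      rw [Set.mem_singleton_iff] at hc
      have := ((sigma_eq k).mp hc).2
      simp only [Fin.val_mk] at this
      omega
    · intro hc
      rcases hc with hc | hc
      · rw [hP] at hc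
        have := ((sigma_eq k).mp hc).2
        simp only [Fin.val_mk] at this
        have hd := Nat.div_le_self (i : ℕ) 2
        omega
      · rw [Set.mem_singleton_iff] at hc
        rw [hP] at hc
        have := ((sigma_eq k).mp hc).2
        simp only [Fin.val_mk] at this
        have hd := Nat.div_le_self (i : ℕ) 2
        omega
  · have hi0 : (i : ℕ) = 0 := by omega
    have hH1 : 1 ≤ H k (t : ℕ) := by
      rw [hi0, Nat.size_zero] at hsz
      omega
    have ht0 : (t : ℕ) ≠ 0 ∧ (t : ℕ) ≠ 24 * k := by
      constructor <;> intro hc <;> rw [(H_zero_iff k (t:ℕ)).mpr (by tauto)] at hH1 <;> omega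
    have hP : P k ⟨t, i⟩ = ⟨⟨(t : ℕ) - 1, by omega⟩, ⟨0, Nat.two_pow_pos _⟩⟩ :=
      P_spine k hi0 (by omega)
    rw [nbhd_spine k hi0 (by omega) ht0.2]
    rw [Set.ncard_insert_of_notMem, Set.ncard_insert_of_notMem, Set.ncard_singleton]
    · intro hc
      rw [Set.mem_singleton_iff] at hc
      have := ((sigma_eq k).mp hc).1
      simp only [Fin.val_mk] at this
      omega
    · intro hc
      rcases hc with hc | hc
      · rw [hP] at hc
        have h1 := ((sigma_eq k).mp hc).1
        have h2 := ((sigma_eq k).mp hc).2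
        simp only [Fin.val_mk] at h1 h2
        omega
      · rw [Set.mem_singleton_iff, hP] at hc
        have := ((sigma_eq k).mp hc).1
        simp only [Fin.val_mk] at this
        omega

lemma leaf_iff (hk : 1 ≤ k) (x : V k) :
    ((G k).neighborSet x).ncard = 1 ↔ Nat.size ((x.2 : ℕ)) = H k (x.1 : ℕ) := by
  obtain ⟨t, i⟩ := x
  constructor
  · intro h
    by_contra hc
    rw [nonleaf_ncard k hc] at h
    omega
  · intro h
    exact leaf_ncard k hk h

lemma deg_13 (hk : 1 ≤ k) (x : V k) :
    ((G k).neighborSet x).ncard = 1 ∨ ((G k).neighborSet x).ncard = 3 := by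
  obtain ⟨t, i⟩ := x
  by_cases h : Nat.size (i : ℕ) = H k (t : ℕ)
  · exact Or.inl (leaf_ncard k hk h)
  · exact Or.inr (nonleaf_ncard k h)

end S2

namespace S2
open SimpleGraph

variable (k : ℕ)

lemma dist_le_D (s t : Fin (m k)) (i : Fin (2 ^ H k s)) (j : Fin (2 ^ H k t))
    (hst : (s : ℕ) ≤ (t : ℕ)) :
    (G k).dist ⟨s, i⟩ ⟨t, j⟩ ≤ Nat.size (i : ℕ) + Nat.size (j : ℕ) + ((t : ℕ) - (s : ℕ)) := by
  have h1 : (P k)^[Nat.size (i : ℕ)] ⟨s, i⟩ = (⟨s, ⟨0, Nat.two_pow_pos _⟩⟩ : V k) :=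
    iter_to_spine k s i
  have hdep1 : Nat.size (i : ℕ) ≤ dep k ⟨s, i⟩ := by rw [dep_mk]; omega
  have h2 : (P k)^[((t : ℕ) - (s : ℕ)) + Nat.size (j : ℕ)] ⟨t, j⟩ =
      (⟨s, ⟨0, Nat.two_pow_pos _⟩⟩ : V k) := by
    rw [Function.iterate_add_apply, iter_to_spine, iter_spine k t _ (by omega)]
    exact (sigma_eq k).mpr ⟨by simp only [Fin.val_mk]; omega, rfl⟩
  have hdep2 : ((t : ℕ) - (s : ℕ)) + Nat.size (j : ℕ) ≤ dep k ⟨t, j⟩ := by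
    rw [dep_mk]; omega
  have hd := SimpleGraph.dist_le
    (((walkUp k (Nat.size (i : ℕ)) ⟨s, i⟩ hdep1).copy rfl h1).append
     (((walkUp k (((t : ℕ) - (s : ℕ)) + Nat.size (j : ℕ)) ⟨t, j⟩ hdep2).copy rfl h2).reverse))
  rw [Walk.length_append, Walk.length_reverse, Walk.length_copy, Walk.length_copy,
    walkUp_length, walkUp_length] at hd
  omega

lemma size_div_pow {i : ℕ} : ∀ c, c ≤ Nat.size i → Nat.size (i / 2 ^ c) = Nat.size i - c := by
  intro c
  induction c with
  | zero => intro _; simp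
  | succ c ih =>
    intro hc
    have h1 : 2 ^ c ≤ i := Nat.lt_size.mp (by omega)
    have h2 : 1 ≤ i / 2 ^ c := (Nat.one_le_div_iff (Nat.two_pow_pos c)).mpr h1
    have h3 : i / 2 ^ (c + 1) = (i / 2 ^ c) / 2 := by
      rw [Nat.div_div_eq_div_mul, ← pow_succ]
    rw [h3]
    have h4 := size_div2 h2
    rw [ih (by omega)] at h4
    omega

lemma div_pow_pos {i c : ℕ} (h : c < Nat.size i) : 1 ≤ i / 2 ^ c :=
  (Nat.one_le_div_iff (Nat.two_pow_pos c)).mpr (Nat.lt_size.mp h)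

lemma dist_ge_D (s t : Fin (m k)) (i : Fin (2 ^ H k s)) (j : Fin (2 ^ H k t))
    (hst : (s : ℕ) < (t : ℕ)) :
    Nat.size (i : ℕ) + Nat.size (j : ℕ) + ((t : ℕ) - (s : ℕ)) ≤ (G k).dist ⟨s, i⟩ ⟨t, j⟩ := by
  classical
  have htm : (t : ℕ) < m k := t.2
  set fA : ℕ → V k := fun ρ =>
    if h : ρ < m k then ⟨⟨ρ, h⟩, ⟨0, Nat.two_pow_pos _⟩⟩ else root k with hfA
  set fB : ℕ → V k :=
    fun c => ⟨s, ⟨(i : ℕ) / 2 ^ c, lt_of_le_of_lt (Nat.div_le_self _ _) i.2⟩⟩ with hfB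
  set fC : ℕ → V k :=
    fun c => ⟨t, ⟨(j : ℕ) / 2 ^ c, lt_of_le_of_lt (Nat.div_le_self _ _) j.2⟩⟩ with hfC
  set A : Finset (V k) := (Finset.Ioc (s : ℕ) (t : ℕ)).image fA with hA
  set B : Finset (V k) := (Finset.range (Nat.size (i : ℕ))).image fB with hB
  set C : Finset (V k) := (Finset.range (Nat.size (j : ℕ))).image fC with hC
  have hfAval : ∀ ρ, ρ ∈ Finset.Ioc (s : ℕ) (t : ℕ) →
      ∀ hlt : ρ < m k, fA ρ = ⟨⟨ρ, hlt⟩, ⟨0, Nat.two_pow_pos _⟩⟩ := by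
    intro ρ hρ hlt
    rw [hfA]
    simp only [dif_pos hlt]
  -- membership conditions
  have hKA : ∀ κ ∈ A, (Anc k κ ⟨s, i⟩ ↔ ¬ Anc k κ ⟨t, j⟩) := by
    intro κ hκ
    obtain ⟨ρ, hρ, rfl⟩ := Finset.mem_image.mp hκ
    rw [Finset.mem_Ioc] at hρ
    have hlt : ρ < m k := by omega
    rw [hfAval ρ (Finset.mem_Ioc.mpr hρ) hlt]
    constructor
    · intro h
      exfalso
      rcases anc_char k h with ⟨h1, _⟩ | ⟨h1, _⟩ <;> simp only [Fin.val_mk] at h1 <;> omega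
    · intro h
      exfalso
      exact h (anc_spine0 k j (by simp only [Fin.val_mk]; omega))
  have hKB : ∀ κ ∈ B, (Anc k κ ⟨s, i⟩ ↔ ¬ Anc k κ ⟨t, j⟩) := by
    intro κ hκ
    obtain ⟨c, hc, rfl⟩ := Finset.mem_image.mp hκ
    rw [Finset.mem_range] at hc
    rw [hfB]
    constructor
    · intro _
      intro h
      rcases anc_char k h with ⟨h1, _⟩ | ⟨h1, h2⟩
      · omega
      · simp only [Fin.val_mk] at h2
        have := div_pow_pos (i := (i : ℕ)) hc
        omega
    · intro _
      exact anc_shift k s i c (by omega)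
  have hKC : ∀ κ ∈ C, (Anc k κ ⟨s, i⟩ ↔ ¬ Anc k κ ⟨t, j⟩) := by
    intro κ hκ
    obtain ⟨c, hc, rfl⟩ := Finset.mem_image.mp hκ
    rw [Finset.mem_range] at hc
    rw [hfC]
    constructor
    · intro h
      exfalso
      rcases anc_char k h with ⟨h1, _⟩ | ⟨h1, _⟩ <;> omega
    · intro h
      exfalso
      exact h (anc_shift k t j c (by omega))
  -- cardinalities
  have hcardA : A.card = (t : ℕ) - (s : ℕ) := by
    rw [hA, Finset.card_image_of_injOn, Nat.card_Ioc]
    intro a ha b hb hab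
    rw [Finset.mem_coe, Finset.mem_Ioc] at ha hb
    have hla : a < m k := by omega
    have hlb : b < m k := by omega
    rw [hfAval a (Finset.mem_Ioc.mpr ha) hla, hfAval b (Finset.mem_Ioc.mpr hb) hlb] at hab
    have := ((sigma_eq k).mp hab).1
    simpa using this
  have hcardB : B.card = Nat.size (i : ℕ) := by
    rw [hB, Finset.card_image_of_injOn, Finset.card_range]
    intro a ha b hb hab
    rw [Finset.mem_coe, Finset.mem_range] at ha hb
    rw [hfB] at hab
    have h2 := ((sigma_eq k).mp hab).2
    simp only [Fin.val_mk] at h2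
    have ha' := size_div_pow (i := (i : ℕ)) a (by omega)
    have hb' := size_div_pow (i := (i : ℕ)) b (by omega)
    rw [h2] at ha'
    omega
  have hcardC : C.card = Nat.size (j : ℕ) := by
    rw [hC, Finset.card_image_of_injOn, Finset.card_range]
    intro a ha b hb hab
    rw [Finset.mem_coe, Finset.mem_range] at ha hb
    rw [hfC] at hab
    have h2 := ((sigma_eq k).mp hab).2
    simp only [Fin.val_mk] at h2
    have ha' := size_div_pow (i := (j : ℕ)) a (by omega)
    have hb' := size_div_pow (i := (j : ℕ)) b (by omega)
    rw [h2] at ha'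
    omega
  -- disjointness
  have hdAB : Disjoint A B := by
    rw [Finset.disjoint_left]
    intro κ hκA hκB
    obtain ⟨ρ, hρ, rfl⟩ := Finset.mem_image.mp hκA
    obtain ⟨c, hc, hcB⟩ := Finset.mem_image.mp hκB
    rw [Finset.mem_Ioc] at hρ
    have hlt : ρ < m k := by omega
    rw [hfAval ρ (Finset.mem_Ioc.mpr hρ) hlt, hfB] at hcB
    have := ((sigma_eq k).mp hcB).1
    simp only [Fin.val_mk] at this
    omega
  have hdAC : Disjoint A C := by
    rw [Finset.disjoint_left]
    intro κ hκA hκC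
    obtain ⟨ρ, hρ, rfl⟩ := Finset.mem_image.mp hκA
    obtain ⟨c, hc, hcC⟩ := Finset.mem_image.mp hκC
    rw [Finset.mem_Ioc] at hρ
    rw [Finset.mem_range] at hc
    have hlt : ρ < m k := by omega
    rw [hfAval ρ (Finset.mem_Ioc.mpr hρ) hlt, hfC] at hcC
    have h2 := ((sigma_eq k).mp hcC).2
    simp only [Fin.val_mk] at h2
    have := div_pow_pos (i := (j : ℕ)) hc
    omega
  have hdBC : Disjoint B C := by
    rw [Finset.disjoint_left]
    intro κ hκB hκC
    obtain ⟨c, hc, rfl⟩ := Finset.mem_image.mp hκB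
    obtain ⟨c', hc', hcC⟩ := Finset.mem_image.mp hκC
    rw [hfB, hfC] at hcC
    have := ((sigma_eq k).mp hcC).1
    omega
  have hdA_BC : Disjoint A (B ∪ C) := Finset.disjoint_union_right.mpr ⟨hdAB, hdAC⟩
  have hKall : ∀ κ ∈ A ∪ (B ∪ C), (Anc k κ ⟨s, i⟩ ↔ ¬ Anc k κ ⟨t, j⟩) := by
    intro κ hκ
    rcases Finset.mem_union.mp hκ with h | h
    · exact hKA κ h
    · rcases Finset.mem_union.mp h with h | h
      · exact hKB κ h
      · exact hKC κ h
  have hcard : (A ∪ (B ∪ C)).card =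
      ((t : ℕ) - (s : ℕ)) + (Nat.size (i : ℕ) + Nat.size (j : ℕ)) := by
    rw [Finset.card_union_of_disjoint hdA_BC, Finset.card_union_of_disjoint hdBC,
      hcardA, hcardB, hcardC]
  have := card_le_dist k ⟨s, i⟩ ⟨t, j⟩ (A ∪ (B ∪ C)) hKall
  omega

end S2

namespace S2
open SimpleGraph

variable (k : ℕ)

lemma leaf_dist_ne_20_aux (hk : 1 ≤ k) (s t : Fin (m k)) (i : Fin (2 ^ H k s))
    (j : Fin (2 ^ H k t)) (hi : Nat.size (i : ℕ) = H k (s : ℕ))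
    (hj : Nat.size (j : ℕ) = H k (t : ℕ)) (hst : (s : ℕ) ≤ (t : ℕ)) :
    (G k).dist ⟨s, i⟩ ⟨t, j⟩ ≠ 20 := by
  have hle := dist_le_D k s t i j hst
  have hHs := H_le k (s : ℕ)
  have hHt := H_le k (t : ℕ)
  rcases eq_or_lt_of_le hst with heq | hlt
  · omega
  · have hge := dist_ge_D k s t i j hlt
    have hne := key_arith k hk (s : ℕ) (t : ℕ) hlt
      (by have := t.2; have hm := m_val k; omega)
    omega

lemma leaf_dist_ne_20 (hk : 1 ≤ k) (x y : V k)
    (hx : Nat.size ((x.2 : ℕ)) = H k (x.1 : ℕ))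
    (hy : Nat.size ((y.2 : ℕ)) = H k (y.1 : ℕ)) :
    (G k).dist x y ≠ 20 := by
  obtain ⟨s, i⟩ := x
  obtain ⟨t, j⟩ := y
  rcases le_total (s : ℕ) (t : ℕ) with h | h
  · exact leaf_dist_ne_20_aux k hk s t i j hx hy h
  · rw [SimpleGraph.dist_comm]
    exact leaf_dist_ne_20_aux k hk t s j i hy hx h

lemma leaf_dep_even (x : V k) (hx : Nat.size ((x.2 : ℕ)) = H k (x.1 : ℕ)) :
    dep k x % 2 = 0 := by
  obtain ⟨t, i⟩ := x
  rw [dep_mk]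
  dsimp only at hx
  rw [hx]
  have := H_parity k (t : ℕ)
  omega

lemma leaf_dist_even (x y : V k)
    (hx : Nat.size ((x.2 : ℕ)) = H k (x.1 : ℕ))
    (hy : Nat.size ((y.2 : ℕ)) = H k (y.1 : ℕ)) :
    Even ((G k).dist x y) := by
  obtain ⟨q, hq⟩ := (connected k).exists_walk_length_eq_dist x y
  have hp := walk_parity k q
  have h1 := leaf_dep_even k x hx
  have h2 := leaf_dep_even k y hy
  rw [Nat.even_iff]
  omega

end S2

section Transport
open SimpleGraph

variable {α β : Type} {G1 : SimpleGraph α} {G2 : SimpleGraph β}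

lemma iso_neighborSet (φ : G1 ≃g G2) (v : α) :
    G2.neighborSet (φ v) = φ '' G1.neighborSet v := by
  ext y
  simp only [mem_neighborSet, Set.mem_image]
  constructor
  · intro h
    refine ⟨φ.symm y, ?_, φ.apply_symm_apply y⟩
    apply φ.map_rel_iff.mp
    rw [φ.apply_symm_apply]
    exact h
  · rintro ⟨z, hz, rfl⟩
    exact φ.map_rel_iff.mpr hz

lemma iso_ncard (φ : G1 ≃g G2) (v : α) :
    (G2.neighborSet (φ v)).ncard = (G1.neighborSet v).ncard := by
  rw [iso_neighborSet φ v]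
  exact Set.ncard_image_of_injective _ (RelIso.injective φ)

lemma iso_dist (φ : G1 ≃g G2) (hc : G1.Connected) (u v : α) :
    G2.dist (φ u) (φ v) = G1.dist u v := by
  apply le_antisymm
  · obtain ⟨p, hp⟩ := hc.exists_walk_length_eq_dist u v
    have h1 := SimpleGraph.dist_le (p.map φ.toHom)
    have h2 : G2.dist (φ u) (φ v) ≤ (p.map φ.toHom).length := h1
    rw [Walk.length_map] at h2
    omega
  · obtain ⟨p, hp⟩ := ((hc u v).map φ.toHom).exists_walk_length_eq_dist
    have hp2 : p.length = G2.dist (φ u) (φ v) := hp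
    have h1 := SimpleGraph.dist_le
      (((p.map φ.symm.toHom).copy (φ.symm_apply_apply u) (φ.symm_apply_apply v)))
    rw [Walk.length_copy, Walk.length_map] at h1
    omega

end Transport
open SimpleGraph S2

/-- For every natural number `N` there exists an even 1-3 tree
`T` with at least `N` vertices such that `T` contains no leaf-leaf path of
length `20`. -/
theorem exists_even_one_three_tree_without_20_path (N : ℕ) :
    ∃ (n : ℕ) (T : SimpleGraph (Fin n)),
      N ≤ n ∧ IsOneThreeTree T ∧ IsEvenTree T ∧ ¬ HasLeafLeafPath T 20 := by
  classical
  set k := N + 1 with hkdef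
  have hk : 1 ≤ k := by omega
  set n := Fintype.card (V k) with hndef
  refine ⟨n, ?_⟩
  set e := Fintype.equivFin (V k) with hedef
  set T : SimpleGraph (Fin n) :=
    { Adj := fun a b => (G k).Adj (e.symm a) (e.symm b)
      symm := ⟨fun a b h => (G k).adj_symm h⟩
      loopless := ⟨fun a h => (G k).irrefl h⟩ } with hTdef
  have hTadj : ∀ a b, T.Adj a b ↔ (G k).Adj (e.symm a) (e.symm b) := fun a b => Iff.rfl
  set φ : (G k) ≃g T :=
    { toEquiv := e
      map_rel_iff' := by
        intro a b
        rw [hTadj]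
        rw [e.symm_apply_apply, e.symm_apply_apply] } with hφdef
  refine ⟨T, ?_, ?_, ?_, ?_⟩
  · -- N ≤ n
    have hinj : Function.Injective
        (fun t : Fin (m k) => (⟨t, ⟨0, Nat.two_pow_pos _⟩⟩ : V k)) := by
      intro a b hab
      exact Fin.ext ((sigma_eq k).mp hab).1
    have h1 : m k ≤ n := by
      have h0 := Fintype.card_le_of_injective _ hinj
      rw [Fintype.card_fin] at h0
      exact h0
    have h2 := m_val k
    omega
  · -- IsOneThreeTree
    constructor
    · constructor
      · exact (Iso.connected_iff φ).mp (connected k)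
      · intro v c hc
        have hc' : ((c.map φ.symm.toHom).IsCycle) :=
          (Walk.map_isCycle_iff_of_injective (RelIso.injective φ.symm)).mpr hc
        exact acyclic k _ hc'
    · intro v
      have h1 : (T.neighborSet (φ (φ.symm v))).ncard
          = ((G k).neighborSet (φ.symm v)).ncard := iso_ncard φ _
      rw [φ.apply_symm_apply] at h1
      rw [h1]
      exact deg_13 k hk _
  · -- IsEvenTree
    intro u w hu hw
    have hu1 : ((G k).neighborSet (φ.symm u)).ncard = 1 := by
      have h := iso_ncard φ (φ.symm u)
      rw [φ.apply_symm_apply] at h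
      rw [← h]
      exact hu
    have hw1 : ((G k).neighborSet (φ.symm w)).ncard = 1 := by
      have h := iso_ncard φ (φ.symm w)
      rw [φ.apply_symm_apply] at h
      rw [← h]
      exact hw
    have hdist : T.dist u w = (G k).dist (φ.symm u) (φ.symm w) := by
      have := iso_dist φ (connected k) (φ.symm u) (φ.symm w)
      rw [φ.apply_symm_apply, φ.apply_symm_apply] at this
      exact this
    rw [hdist]
    exact leaf_dist_even k _ _ ((leaf_iff k hk _).mp hu1) ((leaf_iff k hk _).mp hw1)
  · -- no leaf-leaf path of length 20
    rintro ⟨u, w, p, hu, hw, hp, hl⟩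
    have hu1 : ((G k).neighborSet (φ.symm u)).ncard = 1 := by
      have h := iso_ncard φ (φ.symm u)
      rw [φ.apply_symm_apply] at h
      rw [← h]
      exact hu
    have hw1 : ((G k).neighborSet (φ.symm w)).ncard = 1 := by
      have h := iso_ncard φ (φ.symm w)
      rw [φ.apply_symm_apply] at h
      rw [← h]
      exact hw
    have hp' : (p.map φ.symm.toHom).IsPath :=
      Walk.map_isPath_of_injective (RelIso.injective φ.symm) hp
    have hlen := path_length_eq_dist (isTree k) (p.map φ.symm.toHom) hp'
    rw [Walk.length_map, hl] at hlen
    exact leaf_dist_ne_20 k hk _ _ ((leaf_iff k hk _).mp hu1) ((leaf_iff k hk _).mp hw1)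
      hlen.symm
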